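/- Let N ≥ 2, let w ∈ ℂ∖{0} and set q := w², and let Λ_1,…,Λ_N ∈ ℂ∖{0}. For real t > 0 define G(t) := −1 + (1/2) Σ_{ε=±1} ∏_{i=1}^N [ (t^{N+3/2−i} Λ_i − ε w)/(t^{N+1/2−i} Λ_i − ε w) ] · [ (t^{N−1/2−i} Λ_i − ε w^{−1})/(t^{N+1/2−i} Λ_i − ε w^{−1}) ], where t^{s} denotes the real power of t > 0. Then as t → +∞, G(t) tends to q^{−1}/(Λ_{N−1} Λ_N) − (1 + q^{−1})/Λ_N². (This computes the t → ∞ limit of the constant term G^{(B_N^{(1)})}(Λ) of the first Pieri operator of type B_N^{(1)}, which contributes the extra constant term q^{−1}/(Λ_{N−1}Λ_N) − (1+q^{−1})/Λ_N² to the q-difference Toda Hamiltonian H_1^{(B_N^{(1)})}.) -/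

import Mathlib

open scoped BigOperators Topology
open Filter

noncomputable section



private lemma hasDerivAt_lin (Λi c : ℂ) (k : ℕ) (hk : 2 ≤ k) :
    HasDerivAt (fun z : ℂ => Λi - c * z ^ k) 0 0 := by
  have h := ((hasDerivAt_pow k (0 : ℂ)).const_mul c).const_sub Λi
  have : -(c * ((k : ℂ) * 0 ^ (k - 1))) = 0 := by
    rw [zero_pow (by omega : k - 1 ≠ 0)]; ring
  rwa [this] at h

private lemma hasDerivAt_lin1 (Λi c : ℂ) :
    HasDerivAt (fun z : ℂ => Λi - c * z ^ 1) (-c) 0 := by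
  have h := ((hasDerivAt_pow 1 (0 : ℂ)).const_mul c).const_sub Λi
  have : -(c * ((1 : ℕ) * (0:ℂ) ^ (1 - 1))) = -c := by norm_num
  rwa [this] at h

private def gfacX (w ε Λi : ℂ) (k : ℕ) (z : ℂ) : ℂ :=
  ((Λi - ε * w * z ^ (2*k+3)) * (Λi - ε * w⁻¹ * z ^ (2*k-1))) /
    ((Λi - ε * w * z ^ (2*k+1)) * (Λi - ε * w⁻¹ * z ^ (2*k+1)))

private lemma gfacX_zero {Λi : ℂ} (w ε : ℂ) {k : ℕ} (hk : 1 ≤ k) (hΛ : Λi ≠ 0) :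
    gfacX w ε Λi k 0 = 1 := by
  simp only [gfacX, zero_pow (by omega : 2*k+3 ≠ 0), zero_pow (by omega : 2*k-1 ≠ 0),
    zero_pow (by omega : 2*k+1 ≠ 0), mul_zero, sub_zero]
  exact div_self (mul_ne_zero hΛ hΛ)

private lemma gfacX_deriv_inner (w ε : ℂ) {Λi : ℂ} {k : ℕ} (hk : 2 ≤ k) (hΛ : Λi ≠ 0) :
    HasDerivAt (gfacX w ε Λi k) 0 0 := by
  have h1 := hasDerivAt_lin Λi (ε * w) (2*k+3) (by omega)
  have h2 := hasDerivAt_lin Λi (ε * w⁻¹) (2*k-1) (by omega)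
  have h3 := hasDerivAt_lin Λi (ε * w) (2*k+1) (by omega)
  have h4 := hasDerivAt_lin Λi (ε * w⁻¹) (2*k+1) (by omega)
  have hne : ((fun z : ℂ => (Λi - ε * w * z ^ (2*k+1)) * (Λi - ε * w⁻¹ * z ^ (2*k+1))) 0) ≠ 0 := by
    simp only [zero_pow (by omega : 2*k+1 ≠ 0), mul_zero, sub_zero]
    exact mul_ne_zero hΛ hΛ
  have H := (h1.mul h2).div (h3.mul h4) hne
  unfold gfacX
  refine H.congr_deriv (Eq.symm ?_)
  simp

private lemma gfacX_deriv_one (w ε : ℂ) {Λi : ℂ} (hΛ : Λi ≠ 0) :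
    HasDerivAt (gfacX w ε Λi 1) (-(ε * w⁻¹) / Λi) 0 := by
  have h1 := hasDerivAt_lin Λi (ε * w) (2*1+3) (by omega)
  have h2 := hasDerivAt_lin1 Λi (ε * w⁻¹)
  have h3 := hasDerivAt_lin Λi (ε * w) (2*1+1) (by omega)
  have h4 := hasDerivAt_lin Λi (ε * w⁻¹) (2*1+1) (by omega)
  have hne : ((fun z : ℂ => (Λi - ε * w * z ^ (2*1+1)) * (Λi - ε * w⁻¹ * z ^ (2*1+1))) 0) ≠ 0 := by
    simp only [zero_pow (by omega : 2*1+1 ≠ 0), mul_zero, sub_zero]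
    exact mul_ne_zero hΛ hΛ
  have H := (h1.mul h2).div (h3.mul h4) hne
  unfold gfacX
  rw [show 2*1-1 = 1 from rfl]
  refine H.congr_deriv (Eq.symm ?_)
  norm_num
  rw [div_eq_div_iff hΛ (pow_ne_zero 2 (mul_ne_zero hΛ hΛ))]
  ring

private def lastX (w ε ΛN : ℂ) (z : ℂ) : ℂ :=
  ((ΛN - ε * w * z ^ 3) * (z * ΛN - ε * w⁻¹)) /
    ((ΛN - ε * w * z ^ 1) * (ΛN - ε * w⁻¹ * z ^ 1))

private lemma lastX_zero {ΛN : ℂ} (w ε : ℂ) (hΛ : ΛN ≠ 0) :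
    lastX w ε ΛN 0 = -(ε * w⁻¹) / ΛN := by
  rw [lastX]
  norm_num
  rw [div_eq_div_iff (mul_ne_zero hΛ hΛ) hΛ]
  ring

private lemma lastX_deriv (w : ℂ) {ε ΛN : ℂ} (hw : w ≠ 0) (hΛ : ΛN ≠ 0)
    (hε : ε = 1 ∨ ε = -1) :
    HasDerivAt (lastX w ε ΛN) (1 - (1 + (w ^ 2)⁻¹) / ΛN ^ 2) 0 := by
  have h1 := hasDerivAt_lin ΛN (ε * w) 3 (by omega)
  have h2 : HasDerivAt (fun z : ℂ => z * ΛN - ε * w⁻¹) ΛN 0 := by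
    have := ((hasDerivAt_id (0 : ℂ)).mul_const ΛN).sub_const (ε * w⁻¹)
    simpa using this
  have h3 := hasDerivAt_lin1 ΛN (ε * w)
  have h4 := hasDerivAt_lin1 ΛN (ε * w⁻¹)
  have hne : ((fun z : ℂ => (ΛN - ε * w * z ^ 1) * (ΛN - ε * w⁻¹ * z ^ 1)) 0) ≠ 0 := by
    simp only [zero_pow (by omega : 1 ≠ 0), mul_zero, sub_zero]
    exact mul_ne_zero hΛ hΛ
  have H := (h1.mul h2).div (h3.mul h4) hne
  unfold lastX
  refine H.congr_deriv (Eq.symm ?_)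
  norm_num
  rcases hε with rfl | rfl <;> field_simp <;> ring

private def FX (N : ℕ) (w ε : ℂ) (Λ : ℕ → ℂ) (z : ℂ) : ℂ :=
  (∏ i ∈ Finset.Icc 1 (N - 1), gfacX w ε (Λ i) (N - i) z) * lastX w ε (Λ N) z

private lemma FX_zero (M : ℕ) (w ε : ℂ) (Λ : ℕ → ℂ)
    (hΛ : ∀ i ∈ Finset.Icc 1 (M + 2), Λ i ≠ 0) :
    FX (M + 2) w ε Λ 0 = -(ε * w⁻¹) / Λ (M + 2) := by
  have h1 : (∏ i ∈ Finset.Icc 1 (M + 2 - 1), gfacX w ε (Λ i) (M + 2 - i) 0) = 1 :=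
    Finset.prod_eq_one fun i hi => by
      obtain ⟨hi1, hi2⟩ := Finset.mem_Icc.mp hi
      exact gfacX_zero w ε (by omega) (hΛ i (Finset.mem_Icc.mpr ⟨hi1, by omega⟩))
  rw [FX, h1, one_mul, lastX_zero w ε (hΛ (M + 2) (Finset.mem_Icc.mpr ⟨by omega, le_refl _⟩))]

private lemma FX_deriv (M : ℕ) (w ε : ℂ) (Λ : ℕ → ℂ) (hw : w ≠ 0) (hε : ε = 1 ∨ ε = -1)
    (hΛ : ∀ i ∈ Finset.Icc 1 (M + 2), Λ i ≠ 0) :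
    HasDerivAt (FX (M + 2) w ε Λ)
      ((w ^ 2)⁻¹ / (Λ (M + 1) * Λ (M + 2)) + (1 - (1 + (w ^ 2)⁻¹) / Λ (M + 2) ^ 2)) 0 := by
  have hΛ' : ∀ i, 1 ≤ i → i ≤ M + 2 → Λ i ≠ 0 := fun i h1 h2 =>
    hΛ i (Finset.mem_Icc.mpr ⟨h1, h2⟩)
  have hP : HasDerivAt (fun z => ∏ i ∈ Finset.Icc 1 M, gfacX w ε (Λ i) (M + 2 - i) z) 0 0 := by
    have := HasDerivAt.fun_finsetProd (u := Finset.Icc 1 M)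
      (f := fun i z => gfacX w ε (Λ i) (M + 2 - i) z) (f' := fun _ => 0) (x := 0)
      (fun i hi => by
        obtain ⟨hi1, hi2⟩ := Finset.mem_Icc.mp hi
        exact gfacX_deriv_inner w ε (by omega) (hΛ' i hi1 (by omega)))
    simpa using this
  have hPval : (∏ i ∈ Finset.Icc 1 M, gfacX w ε (Λ i) (M + 2 - i) 0) = 1 :=
    Finset.prod_eq_one fun i hi => by
      obtain ⟨hi1, hi2⟩ := Finset.mem_Icc.mp hi
      exact gfacX_zero w ε (by omega) (hΛ' i hi1 (by omega))
  have hg := gfacX_deriv_one w ε (hΛ' (M + 1) (by omega) (by omega))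
  have hl := lastX_deriv w hw (hΛ' (M + 2) (by omega) (le_refl _)) hε
  have hgz := gfacX_zero w ε (Λi := Λ (M + 1)) (k := 1) (by omega)
    (hΛ' (M + 1) (by omega) (by omega))
  have hlz := lastX_zero w ε (hΛ' (M + 2) (by omega) (le_refl _))
  have H := (hP.mul hg).mul hl
  have hfun : FX (M + 2) w ε Λ = fun z =>
      ((∏ i ∈ Finset.Icc 1 M, gfacX w ε (Λ i) (M + 2 - i) z) * gfacX w ε (Λ (M + 1)) 1 z) *
        lastX w ε (Λ (M + 2)) z := by
    funext z
    rw [FX, show M + 2 - 1 = M + 1 from rfl,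
      Finset.prod_Icc_succ_top (by omega : 1 ≤ M + 1),
      show M + 2 - (M + 1) = 1 from by omega]
  rw [hfun]
  refine H.congr_deriv (Eq.symm ?_)
  simp only [Pi.mul_apply]
  rw [hPval, hgz, hlz]
  have hM1 : Λ (M + 1) ≠ 0 := hΛ' (M + 1) (by omega) (by omega)
  have hM2 : Λ (M + 2) ≠ 0 := hΛ' (M + 2) (by omega) (le_refl _)
  rcases hε with rfl | rfl <;> field_simp <;> ring

private lemma unscale {e q : ℂ} (Λi c : ℂ) (h : e * q = 1) :
    Λi - c * q = e⁻¹ * (e * Λi - c) := by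
  have he : e ≠ 0 := left_ne_zero_of_mul_eq_one h
  have hq : q = e⁻¹ := eq_inv_of_mul_eq_one_left (by rwa [mul_comm] at h)
  rw [hq]
  field_simp

private lemma scale4 (A B C D x y z : ℂ) (h : x * z = y * y) (hy : y ≠ 0) :
    x * A * (z * B) / (y * C * (y * D)) = A * B / (C * D) := by
  rw [show x * A * (z * B) = y * y * (A * B) by rw [← h]; ring,
      show y * C * (y * D) = y * y * (C * D) by ring,
      mul_div_mul_left _ _ (mul_ne_zero hy hy)]

private lemma scale4s (A B C D x y s : ℂ) (h : x = y * y * s) (hy : y ≠ 0) (hs : s ≠ 0) :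
    x * A * B / (y * C * (y * D)) / s = A * B / (C * D) := by
  rw [div_div, show x * A * B = y * y * s * (A * B) by rw [h]; ring,
      show y * C * (y * D) * s = y * y * s * (C * D) by ring,
      mul_div_mul_left _ _ (mul_ne_zero (mul_ne_zero hy hy) hs)]

/-- The `t → ∞` limit of the constant term `G^{(B_N^{(1)})}(Λ)` of the first Pieri
operator of type `B_N^{(1)}`: with `q = w²` (so `w` plays the role of `q^{1/2}`) and
`G(t) = -1 + (1/2) ∑_{ε=±1} ∏_{i=1}^N [(t^{N+3/2-i} Λ_i - εw)/(t^{N+1/2-i} Λ_i - εw)] ·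
  [(t^{N-1/2-i} Λ_i - εw⁻¹)/(t^{N+1/2-i} Λ_i - εw⁻¹)]`,
one has `G(t) → q⁻¹/(Λ_{N-1} Λ_N) - (1 + q⁻¹)/Λ_N²` as `t → +∞`. -/
theorem pieri_constant_term_limit_B (N : ℕ) (hN : 2 ≤ N) (w : ℂ) (hw : w ≠ 0)
    (Λ : ℕ → ℂ) (hΛ : ∀ i ∈ Finset.Icc 1 N, Λ i ≠ 0) :
    Tendsto (fun t : ℝ =>
        -1 + (1 / 2 : ℂ) *
          ∑ ε ∈ ({1, -1} : Finset ℤ),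
            ∏ i ∈ Finset.Icc 1 N,
              ((((t ^ ((N : ℝ) + 3 / 2 - (i : ℝ)) : ℝ) : ℂ) * Λ i - (ε : ℂ) * w) /
                  (((t ^ ((N : ℝ) + 1 / 2 - (i : ℝ)) : ℝ) : ℂ) * Λ i - (ε : ℂ) * w)) *
                ((((t ^ ((N : ℝ) - 1 / 2 - (i : ℝ)) : ℝ) : ℂ) * Λ i - (ε : ℂ) * w⁻¹) /
                  (((t ^ ((N : ℝ) + 1 / 2 - (i : ℝ)) : ℝ) : ℂ) * Λ i - (ε : ℂ) * w⁻¹)))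
      atTop
      (𝓝 ((w ^ 2)⁻¹ / (Λ (N - 1) * Λ N) - (1 + (w ^ 2)⁻¹) / Λ N ^ 2)) := by
  obtain ⟨M, rfl⟩ : ∃ M, N = M + 2 := ⟨N - 2, by omega⟩
  have hΛ' : ∀ i, 1 ≤ i → i ≤ M + 2 → Λ i ≠ 0 := fun i h1 h2 =>
    hΛ i (Finset.mem_Icc.mpr ⟨h1, h2⟩)
  set L : ℂ := (w ^ 2)⁻¹ / (Λ (M + 1) * Λ (M + 2)) + (1 - (1 + (w ^ 2)⁻¹) / Λ (M + 2) ^ 2)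
    with hL
  set F : ℂ → ℂ := fun z => (1 / 2 : ℂ) * (FX (M + 2) w 1 Λ z + FX (M + 2) w (-1) Λ z) with hF
  have hFd : HasDerivAt F L 0 := by
    have h1 := FX_deriv M w 1 Λ hw (Or.inl rfl) hΛ
    have h2 := FX_deriv M w (-1) Λ hw (Or.inr rfl) hΛ
    have h := (h1.add h2).const_mul (1 / 2 : ℂ)
    refine h.congr_deriv (Eq.symm ?_)
    rw [hL]; ring
  have hF0 : F 0 = 0 := by
    rw [hF]
    simp only
    rw [FX_zero M w 1 Λ hΛ, FX_zero M w (-1) Λ hΛ]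
    ring
  have hslope : Tendsto (fun z : ℂ => F z / z) (𝓝[≠] (0 : ℂ)) (𝓝 L) := by
    have h := hasDerivAt_iff_tendsto_slope.mp hFd
    have hsl : slope F 0 = fun z => F z / z := by
      funext z
      rw [slope_def_field, hF0, sub_zero, sub_zero]
    rwa [hsl] at h
  have hs : Tendsto (fun t : ℝ => (((t ^ (-(1 / 2 : ℝ)) : ℝ)) : ℂ)) atTop (𝓝[≠] (0 : ℂ)) := by
    rw [tendsto_nhdsWithin_iff]
    constructor
    · have h0 : Tendsto (fun t : ℝ => t ^ (-(1 / 2 : ℝ))) atTop (𝓝 0) :=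
        tendsto_rpow_neg_atTop (by norm_num)
      have := (Complex.continuous_ofReal.tendsto 0).comp h0
      simpa [Function.comp_def] using this
    · filter_upwards [eventually_gt_atTop (0 : ℝ)] with t ht
      have : (0 : ℝ) < t ^ (-(1 / 2 : ℝ)) := Real.rpow_pos_of_pos ht _
      show (((t ^ (-(1 / 2 : ℝ)) : ℝ)) : ℂ) ≠ 0
      exact_mod_cast this.ne'
  have hcomp := hslope.comp hs
  have hfinal := (tendsto_const_nhds (x := (-1 : ℂ)) (f := atTop)).add hcomp
  have heq : (w ^ 2)⁻¹ / (Λ (M + 2 - 1) * Λ (M + 2)) - (1 + (w ^ 2)⁻¹) / Λ (M + 2) ^ 2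
      = -1 + L := by
    rw [show M + 2 - 1 = M + 1 from rfl, hL]; ring
  rw [heq]
  refine Tendsto.congr' ?_ hfinal
  filter_upwards [eventually_gt_atTop (0 : ℝ)] with t ht
  simp only [Function.comp_apply]
  set s : ℂ := ((t ^ (-(1 / 2 : ℝ)) : ℝ) : ℂ) with hsdef
  have hspos : (0 : ℝ) < t ^ (-(1 / 2 : ℝ)) := Real.rpow_pos_of_pos ht _
  have hsne : s ≠ 0 := by rw [hsdef]; exact_mod_cast hspos.ne'
  have hrne : ∀ a : ℝ, ((t ^ a : ℝ) : ℂ) ≠ 0 := fun a => by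
    exact_mod_cast (Real.rpow_pos_of_pos ht a).ne'
  have hpow : ∀ n : ℕ, s ^ n = ((t ^ (-(n : ℝ) / 2) : ℝ) : ℂ) := by
    intro n
    rw [hsdef, ← Complex.ofReal_pow, ← Real.rpow_natCast (t ^ (-(1 / 2 : ℝ))) n,
      ← Real.rpow_mul ht.le]
    congr 2
    ring
  have hone : ∀ a b : ℝ, a + b = 0 → ((t ^ a : ℝ) : ℂ) * ((t ^ b : ℝ) : ℂ) = 1 := by
    intro a b hab
    rw [← Complex.ofReal_mul, ← Real.rpow_add ht, hab, Real.rpow_zero, Complex.ofReal_one]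
  have hq : ∀ (e : ℝ) (n : ℕ), e + (-(n : ℝ) / 2) = 0 → ((t ^ e : ℝ) : ℂ) * s ^ n = 1 := by
    intro e n h
    rw [hpow n]
    exact hone _ _ h
  have hinv : ∀ a : ℝ, ((t ^ a : ℝ) : ℂ)⁻¹ = ((t ^ (-a) : ℝ) : ℂ) := fun a => by
    rw [← Complex.ofReal_inv, Real.rpow_neg ht.le]
  have key : ∀ ε : ℂ,
      (∏ i ∈ Finset.Icc 1 (M + 2),
        ((((t ^ (((M + 2 : ℕ) : ℝ) + 3 / 2 - (i : ℝ)) : ℝ) : ℂ) * Λ i - ε * w) /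
            (((t ^ (((M + 2 : ℕ) : ℝ) + 1 / 2 - (i : ℝ)) : ℝ) : ℂ) * Λ i - ε * w)) *
          ((((t ^ (((M + 2 : ℕ) : ℝ) - 1 / 2 - (i : ℝ)) : ℝ) : ℂ) * Λ i - ε * w⁻¹) /
            (((t ^ (((M + 2 : ℕ) : ℝ) + 1 / 2 - (i : ℝ)) : ℝ) : ℂ) * Λ i - ε * w⁻¹)))
      = FX (M + 2) w ε Λ s / s := by
    intro ε
    have hset : Finset.Icc 1 (M + 2) = Finset.Icc 1 ((M + 1) + 1) := by
      rw [show (M + 1) + 1 = M + 2 from by omega]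
    rw [hset, Finset.prod_Icc_succ_top (by omega : 1 ≤ M + 1 + 1)]
    have hprodeq : ∀ i ∈ Finset.Icc 1 (M + 1),
        ((((t ^ (((M + 2 : ℕ) : ℝ) + 3 / 2 - (i : ℝ)) : ℝ) : ℂ) * Λ i - ε * w) /
            (((t ^ (((M + 2 : ℕ) : ℝ) + 1 / 2 - (i : ℝ)) : ℝ) : ℂ) * Λ i - ε * w)) *
          ((((t ^ (((M + 2 : ℕ) : ℝ) - 1 / 2 - (i : ℝ)) : ℝ) : ℂ) * Λ i - ε * w⁻¹) /
            (((t ^ (((M + 2 : ℕ) : ℝ) + 1 / 2 - (i : ℝ)) : ℝ) : ℂ) * Λ i - ε * w⁻¹))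
        = gfacX w ε (Λ i) (M + 2 - i) s := by
      intro i hi
      obtain ⟨hi1, hi2⟩ := Finset.mem_Icc.mp hi
      have hile : i ≤ M + 2 := by omega
      have hcast : ((M + 2 - i : ℕ) : ℝ) = ((M + 2 : ℕ) : ℝ) - (i : ℝ) := by
        push_cast [Nat.cast_sub hile]
        ring
      have e1 : ((t ^ (((M + 2 : ℕ) : ℝ) + 3 / 2 - (i : ℝ)) : ℝ) : ℂ)
          * s ^ (2 * (M + 2 - i) + 3) = 1 := by
        refine hq _ _ ?_
        push_cast [hcast]
        ring
      have e2 : ((t ^ (((M + 2 : ℕ) : ℝ) + 1 / 2 - (i : ℝ)) : ℝ) : ℂ)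
          * s ^ (2 * (M + 2 - i) + 1) = 1 := by
        refine hq _ _ ?_
        push_cast [hcast]
        ring
      have e3 : ((t ^ (((M + 2 : ℕ) : ℝ) - 1 / 2 - (i : ℝ)) : ℝ) : ℂ)
          * s ^ (2 * (M + 2 - i) - 1) = 1 := by
        refine hq _ _ ?_
        push_cast [Nat.cast_sub (show 1 ≤ 2 * (M + 2 - i) by omega), hcast]
        ring
      rw [gfacX, unscale (Λ i) (ε * w) e1, unscale (Λ i) (ε * w⁻¹) e3,
        unscale (Λ i) (ε * w) e2, unscale (Λ i) (ε * w⁻¹) e2, div_mul_div_comm]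
      have hxz : ((t ^ (((M + 2 : ℕ) : ℝ) + 3 / 2 - (i : ℝ)) : ℝ) : ℂ)⁻¹ *
          ((t ^ (((M + 2 : ℕ) : ℝ) - 1 / 2 - (i : ℝ)) : ℝ) : ℂ)⁻¹ =
          ((t ^ (((M + 2 : ℕ) : ℝ) + 1 / 2 - (i : ℝ)) : ℝ) : ℂ)⁻¹ *
          ((t ^ (((M + 2 : ℕ) : ℝ) + 1 / 2 - (i : ℝ)) : ℝ) : ℂ)⁻¹ := by
        rw [hinv, hinv, hinv, ← Complex.ofReal_mul, ← Complex.ofReal_mul,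
          ← Real.rpow_add ht, ← Real.rpow_add ht]
        congr 2
        ring
      rw [scale4 _ _ _ _ _ _ _ hxz (inv_ne_zero (hrne _))]
    rw [Finset.prod_congr rfl hprodeq]
    have hl : ((((t ^ (((M + 2 : ℕ) : ℝ) + 3 / 2 - ((M + 2 : ℕ) : ℝ)) : ℝ) : ℂ)
            * Λ (M + 2) - ε * w) /
          (((t ^ (((M + 2 : ℕ) : ℝ) + 1 / 2 - ((M + 2 : ℕ) : ℝ)) : ℝ) : ℂ)
            * Λ (M + 2) - ε * w)) *
        ((((t ^ (((M + 2 : ℕ) : ℝ) - 1 / 2 - ((M + 2 : ℕ) : ℝ)) : ℝ) : ℂ)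
            * Λ (M + 2) - ε * w⁻¹) /
          (((t ^ (((M + 2 : ℕ) : ℝ) + 1 / 2 - ((M + 2 : ℕ) : ℝ)) : ℝ) : ℂ)
            * Λ (M + 2) - ε * w⁻¹))
        = lastX w ε (Λ (M + 2)) s / s := by
      have e1 : ((t ^ (((M + 2 : ℕ) : ℝ) + 3 / 2 - ((M + 2 : ℕ) : ℝ)) : ℝ) : ℂ)
          * s ^ 3 = 1 := hq _ 3 (by push_cast; ring)
      have e2 : ((t ^ (((M + 2 : ℕ) : ℝ) + 1 / 2 - ((M + 2 : ℕ) : ℝ)) : ℝ) : ℂ)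
          * s ^ 1 = 1 := hq _ 1 (by push_cast; ring)
      have hmid : ((t ^ (((M + 2 : ℕ) : ℝ) - 1 / 2 - ((M + 2 : ℕ) : ℝ)) : ℝ) : ℂ) = s := by
        rw [hsdef, show ((M + 2 : ℕ) : ℝ) - 1 / 2 - ((M + 2 : ℕ) : ℝ) = -(1 / 2 : ℝ) by ring]
      rw [div_mul_div_comm, hmid, lastX, unscale (Λ (M + 2)) (ε * w) e1,
        unscale (Λ (M + 2)) (ε * w) e2, unscale (Λ (M + 2)) (ε * w⁻¹) e2]
      have hx : ((t ^ (((M + 2 : ℕ) : ℝ) + 3 / 2 - ((M + 2 : ℕ) : ℝ)) : ℝ) : ℂ)⁻¹ =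
          ((t ^ (((M + 2 : ℕ) : ℝ) + 1 / 2 - ((M + 2 : ℕ) : ℝ)) : ℝ) : ℂ)⁻¹ *
          ((t ^ (((M + 2 : ℕ) : ℝ) + 1 / 2 - ((M + 2 : ℕ) : ℝ)) : ℝ) : ℂ)⁻¹ * s := by
        rw [hinv, hinv, hsdef, ← Complex.ofReal_mul, ← Complex.ofReal_mul,
          ← Real.rpow_add ht, ← Real.rpow_add ht]
        congr 2
        ring
      exact (scale4s _ _ _ _ _ _ _ hx (inv_ne_zero (hrne _)) hsne).symm
    rw [hl, FX, show M + 2 - 1 = M + 1 from rfl, mul_div_assoc]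
  rw [Finset.sum_pair (by decide : (1 : ℤ) ≠ -1)]
  simp only [Int.cast_one, Int.cast_neg]
  rw [key 1, key (-1), ← add_div, hF]
  simp only
  rw [mul_div_assoc]
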